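/- arXiv:2001.11647 — 2 statements merged into one kernel-verified Lean document; each statement's English description precedes it below -/
import Mathlib

section
/- One has Σ_v D(v) = r(r+k)^{r−1}, where the sum is over all integer vectors v = (v_1,…,v_r) with 0 = v_r < v_{r−1} < ⋯ < v_1 < r+k. Equivalently, the Verlinde number V_0(r,0,∅) attached to the empty family of weights equals 1. -/
open scoped BigOperators
open Complex

noncomputable section

namespace VerlindePaper

/-- The Schur value `S_λ(z₁,…,z_r) = det(z_j^{λ_i+r-i}) / det(z_j^{r-i})`
(indices `i` are 0-based, so the exponent is `λ i + (r - 1 - i)`). -/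
noncomputable def schur {r : ℕ} (lam : Fin r → ℤ) (z : Fin r → ℂ) : ℂ :=
  Matrix.det (Matrix.of fun i j : Fin r => z j ^ (lam i + ((r : ℤ) - 1 - (i : ℕ)))) /
    Matrix.det (Matrix.of fun i j : Fin r => z j ^ ((r : ℤ) - 1 - (i : ℕ)))

/-- `ζ_v = (e^{2πi v_1/(r+k)}, …, e^{2πi v_r/(r+k)})`. -/
noncomputable def zeta (r k : ℕ) (v : Fin r → ℤ) : Fin r → ℂ :=
  fun j => Complex.exp (2 * (Real.pi : ℂ) * Complex.I * (v j : ℂ) / ((r : ℂ) + (k : ℂ)))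

/-- `D(v) = ∏_{i<j} (2 sin(π(v_i - v_j)/(r+k)))²`. -/
noncomputable def Dv (r k : ℕ) (v : Fin r → ℤ) : ℝ :=
  ∏ p ∈ Finset.univ.filter (fun p : Fin r × Fin r => p.1 < p.2),
    (2 * Real.sin (Real.pi * ((v p.1 : ℝ) - (v p.2 : ℝ)) / ((r : ℝ) + (k : ℝ)))) ^ 2

/-- `P̄_k = {μ : 0 ≤ μ_r ≤ ⋯ ≤ μ_1 ≤ k}` (0-based: `μ 0 = μ_1`). -/
def Pbar (r k : ℕ) : Finset (Fin r → ℤ) :=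
  (Finset.Icc 0 (fun _ => (k : ℤ))).filter (fun μ => ∀ i j : Fin r, i ≤ j → μ j ≤ μ i)

/-- `P_k = {μ : 0 ≤ μ_r ≤ ⋯ ≤ μ_1 ≤ k-1}`. -/
def Pk (r k : ℕ) : Finset (Fin r → ℤ) :=
  (Finset.Icc 0 (fun _ => (k : ℤ) - 1)).filter (fun μ => ∀ i j : Fin r, i ≤ j → μ j ≤ μ i)

/-- `W_k = {μ ∈ P̄_k : μ_r = 0}`. -/
def Wk (r k : ℕ) : Finset (Fin r → ℤ) :=
  (Pbar r k).filter (fun μ => ∀ i : Fin r, (i : ℕ) = r - 1 → μ i = 0)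

/-- `μ* = (k - μ_r, k - μ_{r-1}, …, k - μ_1)`. -/
def mustar (k : ℕ) {r : ℕ} (μ : Fin r → ℤ) : Fin r → ℤ :=
  fun i => (k : ℤ) - μ i.rev

/-- `μ ∼ ν` iff `μ - ν` is a constant vector. -/
def sim {r : ℕ} (μ ν : Fin r → ℤ) : Prop := ∃ a : ℤ, ∀ i, μ i = ν i + a

/-- The index set of the Verlinde sums: integer vectors with
`0 = v_r < v_{r-1} < ⋯ < v_1 < r + k`. -/
def Vset (r k : ℕ) : Finset (Fin r → ℤ) :=
  (Finset.Icc 0 (fun _ => (r : ℤ) + (k : ℤ) - 1)).filter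
    (fun v => (∀ i j : Fin r, i < j → v j < v i) ∧ ∀ i : Fin r, (i : ℕ) = r - 1 → v i = 0)

/-- The Verlinde number `V_g(r,d,(λ_x)_{x∈I})`. -/
noncomputable def verlinde (r k : ℕ) (g : ℕ) (d : ℤ) {I : Type*} [Fintype I]
    (lam : I → Fin r → ℤ) : ℂ :=
  (-1 : ℂ) ^ (d * ((r : ℤ) - 1)) * ((k : ℂ) / (r : ℂ)) ^ g *
    ((r : ℂ) * ((r : ℂ) + (k : ℂ)) ^ (r - 1)) ^ ((g : ℤ) - 1) *
    ∑ v ∈ Vset r k,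
      Complex.exp (2 * (Real.pi : ℂ) * Complex.I *
          ((d : ℂ) / (r : ℂ) -
            (∑ x, ∑ i, (lam x i : ℂ)) / ((r : ℂ) * ((r : ℂ) + (k : ℂ)))) *
          (∑ i, (v i : ℂ))) *
        (∏ x, schur (lam x) (zeta r k v)) * ((Dv r k v : ℂ)) ^ (1 - (g : ℤ))

/-- The Hecke transformation
`H¹(μ) = (k - μ_{r-1} + μ_r, μ_1 - μ_{r-1}, …, μ_{r-2} - μ_{r-1}, 0)`. -/
def H1 (k : ℕ) {r : ℕ} (μ : Fin r → ℤ) : Fin r → ℤ := fun j =>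
  have hj : (j : ℕ) < r := j.isLt
  if (j : ℕ) = 0 then (k : ℤ) - μ ⟨r - 2, by omega⟩ + μ ⟨r - 1, by omega⟩
  else μ ⟨(j : ℕ) - 1, by omega⟩ - μ ⟨r - 2, by omega⟩

/-- The iterated Hecke transformation `H^m = H¹ ∘ ⋯ ∘ H¹`. -/
def Hm (k : ℕ) {r : ℕ} (m : ℕ) (μ : Fin r → ℤ) : Fin r → ℤ := (H1 k)^[m] μ

/-- `μ ∈ Y(λ, ω_s)`: `μ` is a partition obtained from `λ` by adding `s` boxes,
no two in the same row. -/
def inY {r : ℕ} (lam : Fin r → ℤ) (s : ℕ) (μ : Fin r → ℤ) : Prop :=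
  (∀ i j : Fin r, i ≤ j → μ j ≤ μ i) ∧ (∀ i, μ i - lam i = 0 ∨ μ i - lam i = 1) ∧
    (∑ i, μ i) = (∑ i, lam i) + (s : ℤ)

/-- The Vandermonde product `Δ(z) = ∏_{i<j} (z_i - z_j)`. -/
noncomputable def vand {r : ℕ} (z : Fin r → ℂ) : ℂ :=
  ∏ p ∈ Finset.univ.filter (fun p : Fin r × Fin r => p.1 < p.2), (z p.1 - z p.2)

/-- `J_v(t) = Σ_{τ ∈ S_r} sgn(τ) exp(2πi (Σ_j v_{τ(j)} t_j)/(r+k))`. -/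
noncomputable def Jv (r k : ℕ) (v : Fin r → ℤ) (t : Fin r → Fin (r + k)) : ℂ :=
  ∑ τ : Equiv.Perm (Fin r), ((Equiv.Perm.sign τ : ℤ) : ℂ) *
    Complex.exp (2 * (Real.pi : ℂ) * Complex.I *
      (∑ j, (v (τ j) : ℂ) * ((t j : ℕ) : ℂ)) / ((r : ℂ) + (k : ℂ)))




noncomputable def ee (n : ℕ) (m : ℤ) : ℂ :=
  Complex.exp (2 * (Real.pi : ℂ) * Complex.I * (m : ℂ) / (n : ℂ))

lemma ee_eq (n : ℕ) (m : ℤ) :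
    ee n m = Complex.exp (((2 * Real.pi * (m : ℝ) / (n : ℝ) : ℝ) : ℂ) * Complex.I) := by
  unfold ee; congr 1; push_cast; ring

lemma ee_add (n : ℕ) (a b : ℤ) : ee n (a + b) = ee n a * ee n b := by
  unfold ee; rw [← Complex.exp_add]; congr 1; push_cast; ring

lemma ee_zero (n : ℕ) : ee n 0 = 1 := by unfold ee; norm_num

lemma ee_pow (n : ℕ) (m : ℤ) (p : ℕ) : ee n m ^ p = ee n (m * p) := by
  unfold ee; rw [← Complex.exp_nat_mul]; congr 1; push_cast; ring

lemma conj_ee (n : ℕ) (m : ℤ) : (starRingEnd ℂ) (ee n m) = ee n (-m) := by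
  rw [ee_eq, ee_eq, ← Complex.exp_conj, map_mul, Complex.conj_ofReal, Complex.conj_I]
  congr 1; push_cast; ring

lemma normSq_ee (n : ℕ) (m : ℤ) : Complex.normSq (ee n m) = 1 := by
  rw [ee_eq, Complex.normSq_eq_norm_sq, Complex.norm_exp_ofReal_mul_I]; norm_num

lemma ee_re (n : ℕ) (m : ℤ) : (ee n m).re = Real.cos (2 * Real.pi * (m : ℝ) / (n : ℝ)) := by
  rw [ee_eq, Complex.exp_ofReal_mul_I_re]

lemma ee_ne_one (n : ℕ) (m : ℤ) (hm : m ≠ 0) (h : m.natAbs < n) : ee n m ≠ 1 := by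
  intro hc
  have hn : 0 < n := lt_of_le_of_lt (Nat.zero_le _) h
  have hn' : (n:ℂ) ≠ 0 := Nat.cast_ne_zero.mpr hn.ne'
  rw [ee, Complex.exp_eq_one_iff] at hc
  obtain ⟨j, hj⟩ := hc
  have h2 : (2 * (Real.pi:ℂ) * Complex.I) ≠ 0 := by
    simp [Real.pi_ne_zero, Complex.I_ne_zero]
  have hdiv : (m : ℂ) / n = j := by
    have := mul_left_cancel₀ h2 (show (2*(Real.pi:ℂ)*Complex.I) * ((m:ℂ)/n) = (2*(Real.pi:ℂ)*Complex.I) * j by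
      rw [mul_div_assoc] at hj; rw [hj]; ring)
    exact this
  have hmj : (m : ℂ) = j * n := by
    rw [div_eq_iff hn'] at hdiv; rw [hdiv]
  have hmz : m = j * n := by exact_mod_cast hmj
  have hj0 : j ≠ 0 := by rintro rfl; simp at hmz; exact hm hmz
  have : (n:ℤ) ≤ m.natAbs := by
    rw [hmz]
    calc (n:ℤ) = 1 * n := by ring
    _ ≤ (j.natAbs : ℤ) * n := by
        have : (1:ℤ) ≤ j.natAbs := by
          have := Int.natAbs_pos.mpr hj0; omega
        apply mul_le_mul_of_nonneg_right this (by positivity)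
    _ = ((j*(n:ℤ)).natAbs : ℤ) := by
        rw [Int.natAbs_mul]; push_cast; simp
  omega

lemma ee_n_dvd (n : ℕ) (m : ℤ) (h : (n:ℤ) ∣ m) : ee n m = 1 := by
  rcases Nat.eq_zero_or_pos n with rfl | hn
  · unfold ee; norm_num
  obtain ⟨c, rfl⟩ := h
  unfold ee
  rw [show 2 * (Real.pi:ℂ) * Complex.I * ((((n:ℤ)*c : ℤ)):ℂ) / (n:ℂ) = (c:ℂ) * (2*(Real.pi:ℂ)*Complex.I) by
    have hn' : (n:ℂ) ≠ 0 := Nat.cast_ne_zero.mpr hn.ne'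
    push_cast; field_simp]
  exact Complex.exp_int_mul_two_pi_mul_I c

lemma sum_ee (n : ℕ) (a : ℤ) (ha : a.natAbs < n) :
    ∑ x ∈ Finset.Ico (0:ℤ) (n:ℤ), ee n (x * a) = if a = 0 then (n:ℂ) else 0 := by
  have hre : ∑ x ∈ Finset.Ico (0:ℤ) (n:ℤ), ee n (x * a) = ∑ j ∈ Finset.range n, ee n a ^ j := by
    refine Finset.sum_nbij' (fun x => x.toNat) (fun j => (j:ℤ)) ?_ ?_ ?_ ?_ ?_
    · intro x hx; simp only [Finset.mem_Ico] at hx; simp only [Finset.mem_range]; omega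
    · intro j hj; simp only [Finset.mem_range] at hj; simp only [Finset.mem_Ico]; omega
    · intro x hx; simp only [Finset.mem_Ico] at hx; simp [Int.toNat_of_nonneg hx.1]
    · intro j hj; simp
    · intro x hx; simp only [Finset.mem_Ico] at hx
      rw [ee_pow]
      congr 1
      rw [Int.toNat_of_nonneg hx.1]; ring
  rw [hre]
  by_cases h0 : a = 0
  · subst h0; simp [ee_zero]
  · rw [if_neg h0]
    have hne : ee n a ≠ 1 := ee_ne_one n a h0 ha
    rw [geom_sum_eq hne]
    have : ee n a ^ n = 1 := by rw [ee_pow, ee_n_dvd]; exact ⟨a, by ring⟩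
    rw [this]; simp

noncomputable def zeta' (r k : ℕ) (v : Fin r → ℤ) : Fin r → ℂ :=
  fun j => Complex.exp (2 * (Real.pi : ℂ) * Complex.I * (v j : ℂ) / ((r : ℂ) + (k : ℂ)))

lemma zeta'_eq (r k : ℕ) (v : Fin r → ℤ) (j : Fin r) : zeta' r k v j = ee (r + k) (v j) := by
  unfold zeta' ee; congr 2; push_cast; ring

/-- squared chord length -/
lemma normSq_ee_sub (n : ℕ) (a b : ℤ) :
    Complex.normSq (ee n b - ee n a) = (2 * Real.sin (Real.pi * ((a : ℝ) - (b : ℝ)) / (n : ℝ))) ^ 2 := by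
  rw [Complex.normSq_sub, normSq_ee, normSq_ee, conj_ee]
  rw [← ee_add]
  rw [ee_re]
  set θ : ℝ := Real.pi * ((a : ℝ) - (b : ℝ)) / (n : ℝ) with hθ
  have harg : 2 * Real.pi * ((b + -a : ℤ) : ℝ) / (n : ℝ) = 2 * (-θ) := by
    rw [hθ]; push_cast; by_cases hn : (n:ℝ) = 0
    · rw [hn]; simp
    · field_simp; ring
  rw [harg, Real.cos_two_mul, Real.cos_neg]
  have hs := Real.sin_sq_add_cos_sq θ
  nlinarith [hs]

/-- index sets for the free summation -/
def tfin (r k : ℕ) : Fin r → Finset ℤ :=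
  fun i => if (i : ℕ) = r - 1 then {0} else Finset.Ico 0 ((r : ℤ) + (k : ℤ))

/-- two permutations agreeing away from the last index are equal -/
lemma perm_eq_of_agree (r : ℕ) (hr : 0 < r) (α β : Equiv.Perm (Fin r))
    (h : ∀ j : Fin r, (j : ℕ) ≠ r - 1 → α j = β j) : α = β := by
  set L : Fin r := ⟨r - 1, by omega⟩ with hL
  have hlast : α L = β L := by
    by_contra hne
    obtain ⟨j, hj⟩ : ∃ j, β j = α L := ⟨β.symm (α L), by simp⟩
    have hjL : j ≠ L := by
      intro hc; rw [hc] at hj; exact hne hj.symm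
    have hjv : (j : ℕ) ≠ r - 1 := by
      intro hc; exact hjL (Fin.ext hc)
    have heq : α j = α L := by rw [h j hjv, hj]
    exact hjL (α.injective heq)
  refine Equiv.ext fun j => ?_
  by_cases hc : (j : ℕ) = r - 1
  · have : j = L := Fin.ext hc
    rw [this]; exact hlast
  · exact h j hc

lemma filter_last_eq (r : ℕ) (hr : 0 < r) :
    (Finset.univ.filter (fun j : Fin r => (j : ℕ) = r - 1)) = {(⟨r - 1, by omega⟩ : Fin r)} := by
  ext j
  simp [Fin.ext_iff]

lemma card_filter_ne_last (r : ℕ) (hr : 0 < r) :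
    (Finset.univ.filter (fun j : Fin r => ¬ ((j : ℕ) = r - 1))).card = r - 1 := by
  have h := Finset.card_filter_add_card_filter_not (s := (Finset.univ : Finset (Fin r)))
    (p := fun j : Fin r => (j : ℕ) = r - 1)
  rw [filter_last_eq r hr] at h
  simp only [Finset.card_singleton, Finset.card_univ, Fintype.card_fin] at h
  omega

lemma sum_prod_ee (r k : ℕ) (hr : 0 < r) (c : Fin r → ℤ) (hc : ∀ j, (c j).natAbs < r + k) :
    ∑ w ∈ Fintype.piFinset (tfin r k), ∏ j : Fin r, ee (r + k) (w j * c j)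
      = if (∀ j : Fin r, (j : ℕ) ≠ r - 1 → c j = 0) then (((r + k : ℕ)) : ℂ) ^ (r - 1) else 0 := by
  rw [← Finset.prod_univ_sum (tfin r k) (fun j x => ee (r + k) (x * c j))]
  have hfac : ∀ j : Fin r, (∑ x ∈ tfin r k j, ee (r + k) (x * c j))
      = if (j : ℕ) = r - 1 then 1 else (if c j = 0 then (((r + k : ℕ)) : ℂ) else 0) := by
    intro j
    unfold tfin
    by_cases hj : (j : ℕ) = r - 1
    · rw [if_pos hj, if_pos hj, Finset.sum_singleton, zero_mul, ee_zero]
    · rw [if_neg hj, if_neg hj]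
      have : ((r : ℤ) + (k : ℤ)) = ((r + k : ℕ) : ℤ) := by push_cast; ring
      rw [this, sum_ee (r + k) (c j) (hc j)]
  rw [Finset.prod_congr rfl (fun j _ => hfac j)]
  by_cases hall : ∀ j : Fin r, (j : ℕ) ≠ r - 1 → c j = 0
  · rw [if_pos hall]
    have : ∀ j : Fin r, (if (j : ℕ) = r - 1 then (1:ℂ) else (if c j = 0 then (((r + k : ℕ)) : ℂ) else 0))
        = if (j : ℕ) = r - 1 then (1:ℂ) else (((r + k : ℕ)) : ℂ) := by
      intro j
      by_cases hj : (j : ℕ) = r - 1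
      · simp [hj]
      · simp [hj, hall j hj]
    rw [Finset.prod_congr rfl (fun j _ => this j)]
    rw [Finset.prod_ite]
    simp only [Finset.prod_const_one, Finset.prod_const, one_mul]
    rw [card_filter_ne_last r hr]
  · rw [if_neg hall]
    push_neg at hall
    obtain ⟨j0, hj0, hcj0⟩ := hall
    refine Finset.prod_eq_zero (Finset.mem_univ j0) ?_
    rw [if_neg hj0, if_neg hcj0]

lemma det_vand_expand (r k : ℕ) (w : Fin r → ℤ) :
    (Matrix.vandermonde (zeta' r k w)).det
      = ∑ σ : Equiv.Perm (Fin r), ((Equiv.Perm.sign σ : ℤ) : ℂ) *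
          ∏ i : Fin r, ee (r + k) (w (σ i) * ((i : ℕ) : ℤ)) := by
  rw [Matrix.det_apply']
  refine Finset.sum_congr rfl fun σ _ => ?_
  congr 1
  refine Finset.prod_congr rfl fun i _ => ?_
  rw [Matrix.vandermonde_apply, zeta'_eq, ee_pow]

lemma conj_det_vand (r k : ℕ) (w : Fin r → ℤ) :
    (starRingEnd ℂ) (Matrix.vandermonde (zeta' r k w)).det
      = ∑ τ : Equiv.Perm (Fin r), ((Equiv.Perm.sign τ : ℤ) : ℂ) *
          ∏ i : Fin r, ee (r + k) (-(w (τ i) * ((i : ℕ) : ℤ))) := by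
  rw [det_vand_expand, map_sum]
  refine Finset.sum_congr rfl fun τ _ => ?_
  rw [map_mul, map_prod]
  congr 1
  · exact map_intCast _ _
  · exact Finset.prod_congr rfl fun i _ => conj_ee _ _

lemma sum_TT (r k : ℕ) (hr : 0 < r) :
    ∑ w ∈ Fintype.piFinset (tfin r k),
        ((Complex.normSq (Matrix.vandermonde (zeta' r k w)).det : ℝ) : ℂ)
      = (r.factorial : ℂ) * (((r + k : ℕ)) : ℂ) ^ (r - 1) := by
  have step1 : ∀ w : Fin r → ℤ,
      ((Complex.normSq (Matrix.vandermonde (zeta' r k w)).det : ℝ) : ℂ)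
        = ∑ σ : Equiv.Perm (Fin r), ∑ τ : Equiv.Perm (Fin r),
            (((Equiv.Perm.sign σ : ℤ) : ℂ) * ((Equiv.Perm.sign τ : ℤ) : ℂ)) *
              ∏ j : Fin r, ee (r + k)
                (w j * ((((σ.symm j : Fin r) : ℕ) : ℤ) - (((τ.symm j : Fin r) : ℕ) : ℤ))) := by
    intro w
    rw [← Complex.mul_conj]
    rw [conj_det_vand, det_vand_expand, Finset.sum_mul_sum]
    refine Finset.sum_congr rfl fun σ _ => Finset.sum_congr rfl fun τ _ => ?_
    rw [mul_mul_mul_comm]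
    congr 1
    have hP1 : ∏ i : Fin r, ee (r + k) (w (σ i) * ((i : ℕ) : ℤ))
        = ∏ j : Fin r, ee (r + k) (w j * (((σ.symm j : Fin r) : ℕ) : ℤ)) := by
      rw [← Equiv.prod_comp σ (fun x => ee (r + k) (w x * (((σ.symm x : Fin r) : ℕ) : ℤ)))]
      exact Finset.prod_congr rfl fun i _ => by rw [Equiv.symm_apply_apply]
    have hP2 : ∏ i : Fin r, ee (r + k) (-(w (τ i) * ((i : ℕ) : ℤ)))
        = ∏ j : Fin r, ee (r + k) (-(w j * (((τ.symm j : Fin r) : ℕ) : ℤ))) := by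
      rw [← Equiv.prod_comp τ (fun x => ee (r + k) (-(w x * (((τ.symm x : Fin r) : ℕ) : ℤ))))]
      exact Finset.prod_congr rfl fun i _ => by rw [Equiv.symm_apply_apply]
    rw [hP1, hP2, ← Finset.prod_mul_distrib]
    refine Finset.prod_congr rfl fun j _ => ?_
    rw [← ee_add]
    congr 1
    ring
  rw [Finset.sum_congr rfl fun w _ => step1 w]
  rw [Finset.sum_comm]
  rw [Finset.sum_congr rfl fun σ _ => Finset.sum_comm]
  have step2 : ∀ σ : Equiv.Perm (Fin r),
      (∑ τ : Equiv.Perm (Fin r), ∑ w ∈ Fintype.piFinset (tfin r k),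
          (((Equiv.Perm.sign σ : ℤ) : ℂ) * ((Equiv.Perm.sign τ : ℤ) : ℂ)) *
            ∏ j : Fin r, ee (r + k)
              (w j * ((((σ.symm j : Fin r) : ℕ) : ℤ) - (((τ.symm j : Fin r) : ℕ) : ℤ))))
        = (((r + k : ℕ)) : ℂ) ^ (r - 1) := by
    intro σ
    have hτ : ∀ τ : Equiv.Perm (Fin r),
        (∑ w ∈ Fintype.piFinset (tfin r k),
          (((Equiv.Perm.sign σ : ℤ) : ℂ) * ((Equiv.Perm.sign τ : ℤ) : ℂ)) *
            ∏ j : Fin r, ee (r + k)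
              (w j * ((((σ.symm j : Fin r) : ℕ) : ℤ) - (((τ.symm j : Fin r) : ℕ) : ℤ))))
        = if σ = τ then
            (((Equiv.Perm.sign σ : ℤ) : ℂ) * ((Equiv.Perm.sign τ : ℤ) : ℂ)) *
              (((r + k : ℕ)) : ℂ) ^ (r - 1)
          else 0 := by
      intro τ
      set c : Fin r → ℤ :=
        fun j => (((σ.symm j : Fin r) : ℕ) : ℤ) - (((τ.symm j : Fin r) : ℕ) : ℤ) with hcdef
      have hc : ∀ j, (c j).natAbs < r + k := by
        intro j
        have h1 : ((σ.symm j : Fin r) : ℕ) < r := (σ.symm j).isLt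
        have h2 : ((τ.symm j : Fin r) : ℕ) < r := (τ.symm j).isLt
        simp only [hcdef]
        omega
      rw [← Finset.mul_sum, sum_prod_ee r k hr c hc]
      have hiff : (∀ j : Fin r, (j : ℕ) ≠ r - 1 → c j = 0) ↔ σ = τ := by
        constructor
        · intro hcond
          have hsymm : σ.symm = τ.symm := by
            refine perm_eq_of_agree r hr σ.symm τ.symm fun j hj => ?_
            have := hcond j hj
            simp only [hcdef, sub_eq_zero] at this
            exact Fin.ext (by exact_mod_cast this)
          calc σ = σ.symm.symm := (Equiv.symm_symm σ).symm
          _ = τ.symm.symm := by rw [hsymm]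
          _ = τ := Equiv.symm_symm τ
        · rintro rfl j _
          simp [hcdef]
      by_cases hst : σ = τ
      · rw [if_pos (hiff.mpr hst), if_pos hst]
      · rw [if_neg (fun h => hst (hiff.mp h)), if_neg hst, mul_zero]
    rw [Finset.sum_congr rfl fun τ _ => hτ τ]
    rw [Finset.sum_ite_eq Finset.univ σ
      (fun τ => (((Equiv.Perm.sign σ : ℤ) : ℂ) * ((Equiv.Perm.sign τ : ℤ) : ℂ)) *
        (((r + k : ℕ)) : ℂ) ^ (r - 1))]
    rw [if_pos (Finset.mem_univ σ)]
    have hsgn : ((Equiv.Perm.sign σ : ℤ) : ℂ) * ((Equiv.Perm.sign σ : ℤ) : ℂ) = 1 := by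
      rw [← Int.cast_mul, ← Units.val_mul, Int.units_mul_self]
      simp
    rw [hsgn, one_mul]
  rw [Finset.sum_congr rfl fun σ _ => step2 σ]
  rw [Finset.sum_const, Finset.card_univ, Fintype.card_perm, Fintype.card_fin, nsmul_eq_mul]

def Vset' (r k : ℕ) : Finset (Fin r → ℤ) :=
  (Finset.Icc 0 (fun _ => (r : ℤ) + (k : ℤ) - 1)).filter
    (fun v => (∀ i j : Fin r, i < j → v j < v i) ∧ ∀ i : Fin r, (i : ℕ) = r - 1 → v i = 0)

lemma mem_Vset'_iff (r k : ℕ) (v : Fin r → ℤ) :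
    v ∈ Vset' r k ↔ (∀ i, 0 ≤ v i ∧ v i ≤ (r : ℤ) + (k : ℤ) - 1) ∧
      (∀ i j : Fin r, i < j → v j < v i) ∧ (∀ i : Fin r, (i : ℕ) = r - 1 → v i = 0) := by
  unfold Vset'
  rw [Finset.mem_filter, Finset.mem_Icc]
  constructor
  · rintro ⟨⟨h1, h2⟩, h3⟩
    exact ⟨fun i => ⟨h1 i, h2 i⟩, h3⟩
  · rintro ⟨h1, h2⟩
    exact ⟨⟨fun i => (h1 i).1, fun i => (h1 i).2⟩, h2⟩

def Sfix (r : ℕ) : Finset (Equiv.Perm (Fin r)) :=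
  Finset.univ.filter (fun σ => ∀ i : Fin r, (i : ℕ) = r - 1 → σ i = i)

lemma perm_strictMono_apply (r : ℕ) (π : Equiv.Perm (Fin r)) (h : StrictMono ⇑π) :
    ∀ x, π x = x := by
  have hsymm : StrictMono ⇑π.symm := by
    intro a b hab
    rcases lt_trichotomy (π.symm a) (π.symm b) with hc | hc | hc
    · exact hc
    · exfalso
      have := congrArg π hc
      simp only [Equiv.apply_symm_apply] at this
      exact absurd this hab.ne
    · exfalso
      have := h hc
      simp only [Equiv.apply_symm_apply] at this
      exact absurd this hab.asymm
  intro x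
  haveI : WellFoundedLT (Fin r) := inferInstance
  have h1 : x ≤ π x := @StrictMono.le_apply (Fin r) _ _ _ h x
  have h2 : π x ≤ π.symm (π x) := @StrictMono.le_apply (Fin r) _ _ _ hsymm (π x)
  rw [Equiv.symm_apply_apply] at h2
  exact le_antisymm h2 h1

lemma card_Sfix (r : ℕ) (hr : 0 < r) : (Sfix r).card = (r - 1).factorial := by
  have h1 : (Sfix r).card
      = Fintype.card {σ : Equiv.Perm (Fin r) // ∀ i : Fin r, (i : ℕ) = r - 1 → σ i = i} :=
    (Fintype.card_subtype _).symm
  have e1 : {σ : Equiv.Perm (Fin r) // ∀ i : Fin r, (i : ℕ) = r - 1 → σ i = i}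
      ≃ {σ : Equiv.Perm (Fin r) // ∀ a : Fin r, ¬ ((a : ℕ) ≠ r - 1) → σ a = a} :=
    Equiv.subtypeEquivRight (fun σ => by
      constructor
      · intro h a ha; exact h a (not_not.mp ha)
      · intro h i hi; exact h i (not_not.mpr hi))
  have e2 : Equiv.Perm {a : Fin r // (a : ℕ) ≠ r - 1}
      ≃ {σ : Equiv.Perm (Fin r) // ∀ a : Fin r, ¬ ((a : ℕ) ≠ r - 1) → σ a = a} :=
    Equiv.Perm.subtypeEquivSubtypePerm _
  rw [h1, Fintype.card_congr (e1.trans e2.symm), Fintype.card_perm]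
  congr 1
  have hc1 : Fintype.card {a : Fin r // (a : ℕ) = r - 1} = 1 := by
    rw [Fintype.card_subtype, filter_last_eq r hr, Finset.card_singleton]
  have := Fintype.card_subtype_compl (fun a : Fin r => (a : ℕ) = r - 1)
  rw [this, hc1, Fintype.card_fin]

lemma normSq_det_comp (r k : ℕ) (v : Fin r → ℤ) (σ : Equiv.Perm (Fin r)) :
    Complex.normSq (Matrix.vandermonde (zeta' r k (v ∘ ⇑σ))).det
      = Complex.normSq (Matrix.vandermonde (zeta' r k v)).det := by
  have hM : Matrix.vandermonde (zeta' r k (v ∘ ⇑σ))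
      = (Matrix.vandermonde (zeta' r k v)).submatrix (⇑σ) id := by
    ext i j
    simp [Matrix.vandermonde_apply, Matrix.submatrix_apply, zeta', Function.comp]
  rw [hM, Matrix.det_permute]
  rcases Int.isUnit_iff.mp (Equiv.Perm.sign σ).isUnit with h | h
  · rw [h]; simp
  · rw [h]; push_cast; rw [neg_one_mul, Complex.normSq_neg]

lemma det_eq_zero_of_not_inj (r k : ℕ) (w : Fin r → ℤ) (h : ¬ Function.Injective w) :
    (Matrix.vandermonde (zeta' r k w)).det = 0 := by
  rw [Function.not_injective_iff] at h
  obtain ⟨a, b, hab, hne⟩ := h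
  refine Matrix.det_zero_of_row_eq hne ?_
  funext j
  simp [Matrix.vandermonde_apply, zeta', hab]

lemma Vset'_inj (r k : ℕ) (v : Fin r → ℤ) (hv : v ∈ Vset' r k) : Function.Injective v := by
  obtain ⟨_, hanti, _⟩ := (mem_Vset'_iff r k v).mp hv
  intro a b hab
  by_contra hne
  rcases lt_trichotomy a b with hc | hc | hc
  · exact absurd hab (hanti a b hc).ne'
  · exact hne hc
  · exact absurd hab (hanti b a hc).ne

lemma sum_piFinset_eq (r k : ℕ) (hr : 0 < r) :
    ∑ w ∈ Fintype.piFinset (tfin r k),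
        Complex.normSq (Matrix.vandermonde (zeta' r k w)).det
      = ((r - 1).factorial : ℝ) *
        ∑ v ∈ Vset' r k, Complex.normSq (Matrix.vandermonde (zeta' r k v)).det := by
  classical
  have hstep1 : ∑ w ∈ Fintype.piFinset (tfin r k),
        Complex.normSq (Matrix.vandermonde (zeta' r k w)).det
      = ∑ w ∈ (Fintype.piFinset (tfin r k)).filter (fun w => Function.Injective w),
          Complex.normSq (Matrix.vandermonde (zeta' r k w)).det := by
    symm
    refine Finset.sum_filter_of_ne ?_
    intro w _ hne
    by_contra hni
    rw [det_eq_zero_of_not_inj r k w hni] at hne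
    simp at hne
  rw [hstep1]
  have hstep2 : ∑ p ∈ (Vset' r k) ×ˢ (Sfix r),
        Complex.normSq (Matrix.vandermonde (zeta' r k (p.1 ∘ ⇑p.2))).det
      = ∑ w ∈ (Fintype.piFinset (tfin r k)).filter (fun w => Function.Injective w),
          Complex.normSq (Matrix.vandermonde (zeta' r k w)).det := by
    refine Finset.sum_nbij (fun p => p.1 ∘ ⇑p.2) ?_ ?_ ?_ (fun p _ => rfl)
    · -- maps to
      rintro ⟨v, σ⟩ hp
      rw [Finset.mem_product] at hp
      obtain ⟨hv, hσ⟩ := hp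
      obtain ⟨hbd, hanti, hlast⟩ := (mem_Vset'_iff r k v).mp hv
      have hσfix : ∀ i : Fin r, (i : ℕ) = r - 1 → σ i = i := (Finset.mem_filter.mp hσ).2
      rw [Finset.mem_filter]
      constructor
      · rw [Fintype.mem_piFinset]
        intro i
        unfold tfin
        by_cases hi : (i : ℕ) = r - 1
        · rw [if_pos hi, Finset.mem_singleton]
          simp only [Function.comp_apply]
          rw [hσfix i hi]
          exact hlast i hi
        · rw [if_neg hi, Finset.mem_Ico]
          have h1 := (hbd (σ i)).1
          have h2 := (hbd (σ i)).2
          simp only [Function.comp_apply]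
          omega
      · exact (Vset'_inj r k v hv).comp σ.injective
    · -- inj on
      rintro ⟨v, σ⟩ hp ⟨v', σ'⟩ hq h
      simp only [Finset.coe_product, Set.mem_prod, Finset.mem_coe] at hp hq
      obtain ⟨hv, hσ⟩ := hp
      obtain ⟨hv', hσ'⟩ := hq
      obtain ⟨_, hanti, _⟩ := (mem_Vset'_iff r k v).mp hv
      obtain ⟨_, hanti', _⟩ := (mem_Vset'_iff r k v').mp hv'
      have hfun : ∀ x, v (σ x) = v' (σ' x) := fun x => congrFun h x
      set π : Equiv.Perm (Fin r) := σ'.symm.trans σ with hπdef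
      have hπ : ∀ i, v' i = v (π i) := by
        intro i
        have := hfun (σ'.symm i)
        rw [Equiv.apply_symm_apply] at this
        simp only [hπdef, Equiv.trans_apply]
        exact this.symm
      have hmono : StrictMono ⇑π := by
        intro i j hij
        rcases lt_trichotomy (π i) (π j) with hc | hc | hc
        · exact hc
        · exfalso
          have : v' i = v' j := by rw [hπ i, hπ j, hc]
          exact absurd this (hanti' i j hij).ne'
        · exfalso
          have hlt : v (π i) < v (π j) := hanti _ _ hc
          rw [← hπ i, ← hπ j] at hlt
          exact absurd hlt (hanti' i j hij).asymm
      have hπid : ∀ x, π x = x := perm_strictMono_apply r π hmono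
      have hσeq : σ = σ' := by
        refine Equiv.ext fun x => ?_
        have := hπid (σ' x)
        simp only [hπdef, Equiv.trans_apply, Equiv.symm_apply_apply] at this
        exact this
      have hveq : v = v' := by
        funext i
        have := hπ i
        rw [hπid i] at this
        exact this.symm
      rw [Prod.mk.injEq]
      exact ⟨hveq, hσeq⟩
    · -- surj on
      intro w hw
      simp only [Finset.coe_filter, Set.mem_setOf_eq] at hw
      obtain ⟨hwmem, hwinj⟩ := hw
      have hwmem' : ∀ i, w i ∈ tfin r k i := Fintype.mem_piFinset.mp hwmem
      set L : Fin r := ⟨r - 1, by omega⟩ with hLdef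
      have hwL : w L = 0 := by
        have := hwmem' L
        unfold tfin at this
        rw [if_pos rfl, Finset.mem_singleton] at this
        exact this
      have hw0 : ∀ i, 0 ≤ w i := by
        intro i
        have := hwmem' i
        unfold tfin at this
        by_cases hi : (i : ℕ) = r - 1
        · rw [if_pos hi, Finset.mem_singleton] at this; omega
        · rw [if_neg hi, Finset.mem_Ico] at this; exact this.1
      have hw1 : ∀ i, w i ≤ (r : ℤ) + (k : ℤ) - 1 := by
        intro i
        have := hwmem' i
        unfold tfin at this
        by_cases hi : (i : ℕ) = r - 1
        · rw [if_pos hi, Finset.mem_singleton] at this; omega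
        · rw [if_neg hi, Finset.mem_Ico] at this; omega
      set s : Equiv.Perm (Fin r) := Tuple.sort w with hsdef
      have hg : StrictMono (w ∘ ⇑s) :=
        (Tuple.monotone_sort w).strictMono_of_injective (hwinj.comp s.injective)
      set Z : Fin r := ⟨0, hr⟩ with hZdef
      have hgZ : w (s Z) = 0 := by
        have hle : w (s Z) ≤ w (s (s.symm L)) := by
          apply hg.monotone
          exact Fin.mk_le_of_le_val (Nat.zero_le _)
        rw [Equiv.apply_symm_apply, hwL] at hle
        exact le_antisymm hle (hw0 _)
      have hsZ : s Z = L := hwinj (by rw [hgZ, hwL])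
      refine ⟨(fun i => w (s i.rev), s.symm.trans Fin.revPerm), ?_, ?_⟩
      · simp only [Finset.coe_product, Set.mem_prod, Finset.mem_coe]
        constructor
        · rw [mem_Vset'_iff]
          refine ⟨fun i => ⟨hw0 _, hw1 _⟩, ?_, ?_⟩
          · intro i j hij
            exact hg (Fin.rev_lt_rev.mpr hij)
          · intro i hi
            have hiL : i = L := Fin.ext hi
            have hrevL : (L : Fin r).rev = Z := by
              rw [hZdef]
              apply Fin.ext
              rw [Fin.val_rev]
              simp only [hLdef]
              omega
            rw [hiL, hrevL, hgZ]
        · rw [Sfix, Finset.mem_filter]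
          refine ⟨Finset.mem_univ _, ?_⟩
          intro i hi
          have hiL : i = L := Fin.ext hi
          have hsymmL : s.symm L = Z := by
            rw [Equiv.symm_apply_eq]
            exact hsZ.symm
          have hrevZ : (Z : Fin r).rev = L := by
            apply Fin.ext
            simp only [Fin.val_rev, hZdef, hLdef]
          rw [hiL]
          simp only [Equiv.trans_apply, Fin.revPerm_apply]
          rw [hsymmL, hrevZ]
      · funext i
        simp only [Function.comp_apply, Equiv.trans_apply, Fin.revPerm_apply]
        rw [Fin.rev_rev, Equiv.apply_symm_apply]
  rw [← hstep2, Finset.sum_product]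
  have hinner : ∀ v ∈ Vset' r k,
      (∑ σ ∈ Sfix r, Complex.normSq (Matrix.vandermonde (zeta' r k (v ∘ ⇑σ))).det)
        = ((r - 1).factorial : ℝ) * Complex.normSq (Matrix.vandermonde (zeta' r k v)).det := by
    intro v _
    rw [Finset.sum_congr rfl fun σ _ => normSq_det_comp r k v σ]
    rw [Finset.sum_const, card_Sfix r hr, nsmul_eq_mul]
  rw [Finset.sum_congr rfl hinner, ← Finset.mul_sum]

lemma sum_TT_real (r k : ℕ) (hr : 0 < r) :
    ∑ w ∈ Fintype.piFinset (tfin r k),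
        Complex.normSq (Matrix.vandermonde (zeta' r k w)).det
      = (r.factorial : ℝ) * ((r + k : ℕ) : ℝ) ^ (r - 1) := by
  have h := sum_TT r k hr
  have h2 : ((∑ w ∈ Fintype.piFinset (tfin r k),
      Complex.normSq (Matrix.vandermonde (zeta' r k w)).det : ℝ) : ℂ)
      = (((r.factorial : ℝ) * ((r + k : ℕ) : ℝ) ^ (r - 1) : ℝ) : ℂ) := by
    push_cast
    push_cast at h
    exact h
  exact_mod_cast h2

lemma sum_normSq_Vset' (r k : ℕ) (hr : 0 < r) :
    ∑ v ∈ Vset' r k, Complex.normSq (Matrix.vandermonde (zeta' r k v)).det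
      = (r : ℝ) * ((r : ℝ) + (k : ℝ)) ^ (r - 1) := by
  have h1 := sum_TT_real r k hr
  rw [sum_piFinset_eq r k hr] at h1
  have hfac : (((r - 1).factorial : ℝ)) ≠ 0 := Nat.cast_ne_zero.mpr (Nat.factorial_ne_zero _)
  have hrf : (r.factorial : ℝ) = (r : ℝ) * ((r - 1).factorial : ℝ) := by
    rw [← Nat.mul_factorial_pred hr.ne']; push_cast; ring
  apply mul_left_cancel₀ hfac
  rw [h1, hrf]
  push_cast
  ring


lemma prod_pairs {M : Type*} [CommMonoid M] (r : ℕ) (f : Fin r → Fin r → M) :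
    ∏ p ∈ Finset.univ.filter (fun p : Fin r × Fin r => p.1 < p.2), f p.1 p.2
      = ∏ i : Fin r, ∏ j ∈ Finset.Ioi i, f i j := by
  rw [Finset.prod_sigma']
  refine Finset.prod_nbij' (fun p => ⟨p.1, p.2⟩) (fun x => (x.1, x.2)) ?_ ?_ ?_ ?_ ?_
  · intro p hp
    simp only [Finset.mem_filter, Finset.mem_univ, true_and] at hp
    simp [Finset.mem_Ioi, hp]
  · intro x hx
    simp only [Finset.mem_sigma, Finset.mem_univ, Finset.mem_Ioi, true_and] at hx
    simp [hx]
  · intro p _; rfl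
  · intro x _; rfl
  · intro p _; rfl

lemma zeta_eq_zeta' (r k : ℕ) (v : Fin r → ℤ) : zeta r k v = zeta' r k v := rfl

lemma Vset_eq_Vset' (r k : ℕ) : Vset r k = Vset' r k := rfl

lemma Dv_eq_normSq (r k : ℕ) (v : Fin r → ℤ) :
    Dv r k v = Complex.normSq (Matrix.vandermonde (zeta' r k v)).det := by
  rw [Matrix.det_vandermonde]
  rw [map_prod Complex.normSq _ Finset.univ]
  unfold Dv
  rw [prod_pairs r (fun i j => (2 * Real.sin (Real.pi * ((v i : ℝ) - (v j : ℝ)) / ((r : ℝ) + (k : ℝ)))) ^ 2)]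
  refine Finset.prod_congr rfl fun i _ => ?_
  rw [map_prod Complex.normSq _ (Finset.Ioi i)]
  refine Finset.prod_congr rfl fun j _ => ?_
  rw [zeta'_eq, zeta'_eq, normSq_ee_sub]
  push_cast
  ring

/-- `Σ_v D(v) = r(r+k)^{r-1}`; equivalently the Verlinde number
`V_0(r,0,∅)` of the empty family equals `1`. -/
theorem sum_Dv_eq_and_verlinde_empty (r k : ℕ) (hr : 1 ≤ r) (hk : 1 ≤ k) :
    (∑ v ∈ Vset r k, Dv r k v = (r : ℝ) * ((r : ℝ) + (k : ℝ)) ^ (r - 1)) ∧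
      verlinde r k 0 0 (fun x : Empty => x.elim) = 1 := by
  have hr' : 0 < r := hr
  have hsum : ∑ v ∈ Vset r k, Dv r k v = (r : ℝ) * ((r : ℝ) + (k : ℝ)) ^ (r - 1) := by
    rw [Vset_eq_Vset']
    rw [Finset.sum_congr rfl (fun v _ => Dv_eq_normSq r k v)]
    exact sum_normSq_Vset' r k hr'
  refine ⟨hsum, ?_⟩
  unfold verlinde
  have hXne : ((r : ℂ) * ((r : ℂ) + (k : ℂ)) ^ (r - 1)) ≠ 0 := by
    apply mul_ne_zero
    · exact_mod_cast Nat.cast_ne_zero.mpr hr'.ne'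
    · apply pow_ne_zero
      have : (r : ℂ) + (k : ℂ) = ((r + k : ℕ) : ℂ) := by push_cast; ring
      rw [this]
      exact Nat.cast_ne_zero.mpr (by omega)
  have hS : ∑ v ∈ Vset r k, ((Dv r k v : ℝ) : ℂ)
      = (r : ℂ) * ((r : ℂ) + (k : ℂ)) ^ (r - 1) := by
    rw [← Complex.ofReal_sum, hsum]
    push_cast
    ring
  simp only [Finset.univ_eq_empty, Finset.sum_empty, Finset.prod_empty, Int.cast_zero,
    Nat.cast_zero, zero_mul, zpow_zero, pow_zero, one_mul, mul_one, zero_sub, zero_div,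
    sub_zero, sub_self, mul_zero, Complex.exp_zero, zpow_one, zpow_neg, zpow_one]
  rw [hS]
  exact inv_mul_cancel₀ hXne

end VerlindePaper
end
end

section
/- Let r ≥ 2, μ ∈ P̄_k, and let v = (v_1,…,v_r) be any integer vector whose entries are pairwise distinct modulo r+k. Then S_{H^1(μ)}(ζ_v) = (−1)^{r−1} · exp(−2πi(μ_{r−1}+1)|v|/(r+k)) · S_μ(ζ_v). -/
open scoped BigOperators
open Complex

noncomputable section

namespace VerlindePaper

/-- `S_{H¹(μ)}(ζ_v) = (-1)^{r-1} e^{-2πi(μ_{r-1}+1)|v|/(r+k)} S_μ(ζ_v)`. -/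
theorem schur_H1 (r k : ℕ) (hr : 2 ≤ r) (hk : 1 ≤ k)
    (μ : Fin r → ℤ) (hμ : μ ∈ Pbar r k) (v : Fin r → ℤ)
    (hdist : ∀ i j : Fin r, i ≠ j → ¬ (((r : ℤ) + (k : ℤ)) ∣ (v i - v j))) :
    schur (H1 k μ) (zeta r k v) =
      (-1 : ℂ) ^ (r - 1) *
        Complex.exp (-(2 * (Real.pi : ℂ) * Complex.I *
            ((μ ⟨r - 2, by omega⟩ : ℂ) + 1) * (∑ i, (v i : ℂ)) / ((r : ℂ) + (k : ℂ)))) *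
        schur μ (zeta r k v) := by
  classical
  obtain ⟨m, rfl⟩ : ∃ m, r = m + 2 := ⟨r - 2, by omega⟩
  have hNc' : (m : ℂ) + 2 + (k : ℂ) ≠ 0 := by
    have h1 : ((m + 2 + k : ℕ) : ℂ) ≠ 0 := Nat.cast_ne_zero.2 (by omega)
    push_cast at h1
    exact h1
  have hNc : ((m + 2 : ℕ) : ℂ) + (k : ℂ) ≠ 0 := by push_cast; exact hNc'
  set z := zeta (m + 2) k v with hz
  have hz0 : ∀ j, z j ≠ 0 := fun j => Complex.exp_ne_zero _
  have hzpow : ∀ (j : Fin (m + 2)) (a : ℤ), z j ^ a =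
      Complex.exp ((a : ℂ) * (2 * (Real.pi : ℂ) * Complex.I * (v j : ℂ) /
        (((m + 2 : ℕ) : ℂ) + (k : ℂ)))) := by
    intro j a
    rw [Complex.exp_int_mul]
    rfl
  have hper : ∀ (j : Fin (m + 2)) (a : ℤ),
      z j ^ (a + ((m : ℤ) + 2 + (k : ℤ))) = z j ^ a := by
    intro j a
    rw [hzpow, hzpow]
    have hw : ((a + ((m : ℤ) + 2 + (k : ℤ)) : ℤ) : ℂ) *
        (2 * (Real.pi : ℂ) * Complex.I * (v j : ℂ) / (((m + 2 : ℕ) : ℂ) + (k : ℂ))) =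
        (a : ℂ) * (2 * (Real.pi : ℂ) * Complex.I * (v j : ℂ) /
          (((m + 2 : ℕ) : ℂ) + (k : ℂ))) + (v j : ℂ) * (2 * (Real.pi : ℂ) * Complex.I) := by
      push_cast
      field_simp
    rw [hw, Complex.exp_add, Complex.exp_int_mul_two_pi_mul_I, mul_one]
  have hper2 : ∀ (j : Fin (m + 2)) (a b : ℤ), a = b + ((m : ℤ) + 2 + (k : ℤ)) →
      z j ^ a = z j ^ b := by
    intro j a b h
    rw [h]
    exact hper j b
  have hm : m < m + 2 := by omega
  have hm1 : m + 1 < m + 2 := by omega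
  set P : ℤ := μ ⟨m, hm⟩ with hP
  set Q : ℤ := μ ⟨m + 1, hm1⟩ with hQ
  set c : ℤ := P + 1 with hc
  -- the two numerator matrices
  set B : Matrix (Fin (m + 2)) (Fin (m + 2)) ℂ :=
    Matrix.of fun i j => z j ^ (H1 k μ i + (((m + 2 : ℕ) : ℤ) - 1 - ((i : ℕ) : ℤ))) with hB
  set A : Matrix (Fin (m + 2)) (Fin (m + 2)) ℂ :=
    Matrix.of fun i j => z j ^ (μ i + (((m + 2 : ℕ) : ℤ) - 1 - ((i : ℕ) : ℤ))) with hA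
  have hsub : B.submatrix (finRotate (m + 2)) id =
      Matrix.of fun i j => z j ^ (-c) * A i j := by
    ext i j
    simp only [Matrix.submatrix_apply, id_eq, hB, hA, Matrix.of_apply]
    rw [← zpow_add₀ (hz0 j)]
    by_cases hi : i = Fin.last (m + 1)
    · subst hi
      have h0 : finRotate (m + 2) (Fin.last (m + 1)) = 0 := by
        rw [finRotate_succ_apply, Fin.last_add_one]
      rw [h0]
      have hH : H1 k μ (0 : Fin (m + 2)) = (k : ℤ) - P + Q := rfl
      rw [hH]
      have e4 : μ (Fin.last (m + 1)) = Q := rfl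
      rw [e4]
      apply hper2
      simp only [Fin.val_zero, Fin.val_last]
      push_cast
      ring
    · have hival : (i : ℕ) < m + 1 := Fin.val_lt_last hi
      have h1 : finRotate (m + 2) i = ⟨(i : ℕ) + 1, by omega⟩ := by
        rw [finRotate_succ_apply]
        ext
        exact Fin.val_add_one_of_lt (Fin.lt_last_iff_ne_last.mpr hi)
      have hH : H1 k μ (finRotate (m + 2) i) = μ i - P := by
        rw [h1]
        rfl
      have hv : ((finRotate (m + 2) i : Fin (m + 2)) : ℕ) = (i : ℕ) + 1 := by
        rw [h1]
      rw [hH, hv]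
      congr 1
      push_cast
      ring
  have hs : ((Equiv.Perm.sign (finRotate (m + 2)) : ℤ) : ℂ) = (-1 : ℂ) ^ (m + 1) := by
    rw [sign_finRotate]
    push_cast
    ring
  have h1 := Matrix.det_permute (finRotate (m + 2)) B
  rw [hsub, Matrix.det_mul_row, hs] at h1
  have hss : ((-1 : ℂ) ^ (m + 1)) * ((-1 : ℂ) ^ (m + 1)) = 1 := by
    rw [← pow_add]
    exact Even.neg_one_pow ⟨m + 1, rfl⟩
  have hdetB : B.det = (-1 : ℂ) ^ (m + 1) * ((∏ j, z j ^ (-c)) * A.det) := by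
    linear_combination (-((-1 : ℂ) ^ (m + 1))) * h1 - Matrix.det B * hss
  have hprod : (∏ j, z j ^ (-c)) =
      Complex.exp (-(2 * (Real.pi : ℂ) * Complex.I *
        ((μ ⟨m + 2 - 2, by omega⟩ : ℂ) + 1) * (∑ i, (v i : ℂ)) /
        (((m + 2 : ℕ) : ℂ) + (k : ℂ)))) := by
    have h5 : ∀ j : Fin (m + 2), z j ^ (-c) = Complex.exp (((-c : ℤ) : ℂ) *
        (2 * (Real.pi : ℂ) * Complex.I * (v j : ℂ) /
          (((m + 2 : ℕ) : ℂ) + (k : ℂ)))) := fun j => hzpow j (-c)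
    simp only [h5]
    rw [← Complex.exp_sum]
    congr 1
    rw [← Finset.mul_sum]
    have hsum : (∑ j : Fin (m + 2), 2 * (Real.pi : ℂ) * Complex.I * (v j : ℂ) /
          (((m + 2 : ℕ) : ℂ) + (k : ℂ))) =
        2 * (Real.pi : ℂ) * Complex.I * (∑ j : Fin (m + 2), (v j : ℂ)) /
          (((m + 2 : ℕ) : ℂ) + (k : ℂ)) := by
      rw [← Finset.sum_div, ← Finset.mul_sum]
    rw [hsum]
    have e3 : ((μ ⟨m + 2 - 2, by omega⟩ : ℤ) : ℂ) = ((P : ℤ) : ℂ) := rfl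
    rw [e3, hc]
    push_cast
    ring
  have hschurB : schur (H1 k μ) z = B.det /
      Matrix.det (Matrix.of fun i j : Fin (m + 2) =>
        z j ^ (((m + 2 : ℕ) : ℤ) - 1 - ((i : ℕ) : ℤ))) := rfl
  have hschurA : schur μ z = A.det /
      Matrix.det (Matrix.of fun i j : Fin (m + 2) =>
        z j ^ (((m + 2 : ℕ) : ℤ) - 1 - ((i : ℕ) : ℤ))) := rfl
  have hd : m + 2 - 1 = m + 1 := by omega
  rw [hschurB, hschurA, hdetB, hprod, hd]
  ring

end VerlindePaper
end
end
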